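/- Let P : ℝ² → ℝ be a bivariate polynomial, let ℓ be a straight line in ℝ², and let H be a closed half-plane with boundary ℓ such that N(P) ⊆ H, where N(P) = {(m,n) ∈ ℤ²_{≥0} : the coefficient of x^m y^n in P is nonzero}. Then: (1) N(det D²P) ⊆ H + H − (2,2) := {u + v − (2,2) : u, v ∈ H}, which is the closed half-plane with boundary ℓ′ := {u + v − (2,2) : u, v ∈ ℓ} lying on the same side as H; and (2) (det D²P)|_{ℓ′} = det D²(P|_ℓ), where for a line m, P|_m denotes the sum of those terms of P whose index (m-exponent, n-exponent) lies on m. -/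

import Mathlib

open MeasureTheory Real Set
open scoped ENNReal

noncomputable section

/-- Rotation of the plane by angle `θ` about the origin. -/
def planeRot (θ : ℝ) (p : ℝ × ℝ) : ℝ × ℝ :=
  (Real.cos θ * p.1 - Real.sin θ * p.2, Real.sin θ * p.1 + Real.cos θ * p.2)

/-- The `C`-dilation of the interval `[a,b]` about its centre. -/
def dilInterval (C a b : ℝ) : Set ℝ :=
  Set.Icc ((a + b) / 2 - C * (b - a) / 2) ((a + b) / 2 + C * (b - a) / 2)

/-- The `C`-dilation about its centre of the rectangle obtained by rotating the
axis-parallel closed rectangle `[a₁,b₁] × [a₂,b₂]` by the angle `θ`. -/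
def rectD (C θ a₁ b₁ a₂ b₂ : ℝ) : Set (ℝ × ℝ) :=
  planeRot θ '' (dilInterval C a₁ b₁ ×ˢ dilInterval C a₂ b₂)

/-- A rectangle in the plane: the image of an axis-parallel closed rectangle under a rotation. -/
def IsRectangle (T : Set (ℝ × ℝ)) : Prop :=
  ∃ θ a₁ b₁ a₂ b₂ : ℝ, T = rectD 1 θ a₁ b₁ a₂ b₂

/-- The unit square `[-1,1]²`. -/
def unitSq : Set (ℝ × ℝ) := Set.Icc (-1 : ℝ) 1 ×ˢ Set.Icc (-1 : ℝ) 1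

/-- Fourier transform on `ℝ²`. -/
def FT2 (f : ℝ × ℝ → ℂ) (ξ : ℝ × ℝ) : ℂ :=
  ∫ x : ℝ × ℝ,
    Complex.exp ((((-2) * Real.pi * (x.1 * ξ.1 + x.2 * ξ.2) : ℝ) : ℂ) * Complex.I) * f x

/-- Inverse Fourier transform on `ℝ²`. -/
def FTInv2 (f : ℝ × ℝ → ℂ) (x : ℝ × ℝ) : ℂ :=
  ∫ ξ : ℝ × ℝ,
    Complex.exp (((2 * Real.pi * (x.1 * ξ.1 + x.2 * ξ.2) : ℝ) : ℂ) * Complex.I) * f ξ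

/-- Fourier restriction `R_S f` of `f : ℝ² → ℂ` to a set `S ⊆ ℝ²`. -/
def fres2 (f : ℝ × ℝ → ℂ) (S : Set (ℝ × ℝ)) : ℝ × ℝ → ℂ :=
  FTInv2 (S.indicator (FT2 f))

/-- Fourier transform on `ℝ³`. -/
def FT3 (f : ℝ × ℝ × ℝ → ℂ) (ξ : ℝ × ℝ × ℝ) : ℂ :=
  ∫ x : ℝ × ℝ × ℝ,
    Complex.exp ((((-2) * Real.pi * (x.1 * ξ.1 + x.2.1 * ξ.2.1 + x.2.2 * ξ.2.2) : ℝ) : ℂ)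
      * Complex.I) * f x

/-- Inverse Fourier transform on `ℝ³`. -/
def FTInv3 (f : ℝ × ℝ × ℝ → ℂ) (x : ℝ × ℝ × ℝ) : ℂ :=
  ∫ ξ : ℝ × ℝ × ℝ,
    Complex.exp (((2 * Real.pi * (x.1 * ξ.1 + x.2.1 * ξ.2.1 + x.2.2 * ξ.2.2) : ℝ) : ℂ)
      * Complex.I) * f ξ

/-- The vertical strip `S × ℝ ⊆ ℝ³` over a planar set `S`. -/
def vstrip (S : Set (ℝ × ℝ)) : Set (ℝ × ℝ × ℝ) := {p | (p.1, p.2.1) ∈ S}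

/-- Fourier restriction `R_B f` of `f : ℝ³ → ℂ` to a set `B ⊆ ℝ³`. -/
def fres3 (f : ℝ × ℝ × ℝ → ℂ) (B : Set (ℝ × ℝ × ℝ)) : ℝ × ℝ × ℝ → ℂ :=
  FTInv3 (B.indicator (FT3 f))

/-- `f_S` : Fourier restriction of `f : ℝ³ → ℂ` to the strip `S × ℝ`, `S ⊆ ℝ²`. -/
def fstrip (f : ℝ × ℝ × ℝ → ℂ) (S : Set (ℝ × ℝ)) : ℝ × ℝ × ℝ → ℂ :=
  fres3 f (vstrip S)

/-- The vertical `δ`-neighbourhood of the graph of `φ` above `A ⊆ ℝ²`. -/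
def Ngraph (φ : ℝ × ℝ → ℝ) (δ : ℝ) (A : Set (ℝ × ℝ)) : Set (ℝ × ℝ × ℝ) :=
  {p | (p.1, p.2.1) ∈ A ∧ |p.2.2 - φ (p.1, p.2.1)| < δ}

/-- `φ` is `δ`-flat over `S ⊆ ℝ²`. -/
def DeltaFlat (φ : ℝ × ℝ → ℝ) (δ : ℝ) (S : Set (ℝ × ℝ)) : Prop :=
  ∀ u ∈ S, ∀ v ∈ S, |φ v - φ u - fderiv ℝ φ u (v - u)| ≤ δ

/-- Evaluation of a bivariate polynomial at a point of the plane. -/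
def pev (P : MvPolynomial (Fin 2) ℝ) (p : ℝ × ℝ) : ℝ :=
  MvPolynomial.eval ![p.1, p.2] P

/-- Partial derivative in the first variable. -/
def Pdx (P : MvPolynomial (Fin 2) ℝ) : MvPolynomial (Fin 2) ℝ :=
  MvPolynomial.pderiv (0 : Fin 2) P

/-- Partial derivative in the second variable. -/
def Pdy (P : MvPolynomial (Fin 2) ℝ) : MvPolynomial (Fin 2) ℝ :=
  MvPolynomial.pderiv (1 : Fin 2) P

/-- The Hessian determinant `P_xx P_yy - P_xy²` of a bivariate polynomial. -/
def hessDet (P : MvPolynomial (Fin 2) ℝ) : MvPolynomial (Fin 2) ℝ :=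
  Pdx (Pdx P) * Pdy (Pdy P) - Pdy (Pdx P) ^ 2

/-- All coefficients of `P` are bounded in absolute value by `K`. -/
def CoeffBdd (P : MvPolynomial (Fin 2) ℝ) (K : ℝ) : Prop :=
  ∀ μ : Fin 2 →₀ ℕ, |MvPolynomial.coeff μ P| ≤ K

/-- A bivariate polynomial `φ` is `δ`-flat over `S ⊆ ℝ²`. -/
def PolyFlat (P : MvPolynomial (Fin 2) ℝ) (δ : ℝ) (S : Set (ℝ × ℝ)) : Prop :=
  ∀ u ∈ S, ∀ v ∈ S,
    |pev P v - pev P u - pev (Pdx P) u * (v.1 - u.1) - pev (Pdy P) u * (v.2 - u.2)| ≤ δ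

/-- A differentiable function `g : ℝ → ℝ` is `δ`-flat over an interval `I`. -/
def Flat1 (g : ℝ → ℝ) (δ : ℝ) (I : Set ℝ) : Prop :=
  ∀ x ∈ I, ∀ x₀ ∈ I, |g x - g x₀ - deriv g x₀ * (x - x₀)| ≤ δ


open Classical in
/-- The sum of the terms of `P` whose exponent index `(m,n)` lies on the line
`{p : ℝ × ℝ | u.1 * p.1 + u.2 * p.2 = t}`. -/
def lineRestrict (u : ℝ × ℝ) (t : ℝ) (P : MvPolynomial (Fin 2) ℝ) :
    MvPolynomial (Fin 2) ℝ :=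
  ∑ μ ∈ P.support,
    if u.1 * (μ 0 : ℝ) + u.2 * (μ 1 : ℝ) = t then
      MvPolynomial.monomial μ (MvPolynomial.coeff μ P) else 0
section Helpers
open MvPolynomial

/-- The weight of an exponent vector. -/
def wt (u : ℝ × ℝ) (μ : Fin 2 →₀ ℕ) : ℝ := u.1 * (μ 0 : ℝ) + u.2 * (μ 1 : ℝ)

variable (u : ℝ × ℝ)

lemma wt_add (μ ν : Fin 2 →₀ ℕ) : wt u (μ + ν) = wt u μ + wt u ν := by
  simp [wt, Finsupp.add_apply]; ring

lemma coeff_pderiv (i : Fin 2) (P : MvPolynomial (Fin 2) ℝ) (ν : Fin 2 →₀ ℕ) :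
    coeff ν (pderiv i P) = (ν i + 1 : ℕ) * coeff (ν + Finsupp.single i 1) P := by
  classical
  conv_lhs => rw [P.as_sum]
  rw [map_sum, MvPolynomial.coeff_sum]
  simp only [pderiv_monomial, coeff_monomial]
  rw [Finset.sum_eq_single (ν + Finsupp.single i 1)]
  · simp [add_tsub_cancel_right, mul_comm]
  · intro μ _ hne
    split_ifs with h
    · rcases Nat.eq_zero_or_pos (μ i) with h0 | h0
      · simp [h0]
      · exfalso
        apply hne
        rw [← h, tsub_add_cancel_of_le]
        rwa [Finsupp.single_le_iff]
    · rfl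
  · intro h
    simp [MvPolynomial.notMem_support_iff.mp h]

lemma coeff_lineRestrict (t : ℝ) (P : MvPolynomial (Fin 2) ℝ) (μ : Fin 2 →₀ ℕ) :
    coeff μ (lineRestrict u t P) = if wt u μ = t then coeff μ P else 0 := by
  classical
  unfold lineRestrict
  rw [MvPolynomial.coeff_sum]
  by_cases hμ : μ ∈ P.support
  · rw [Finset.sum_eq_single μ]
    · simp [wt, coeff_monomial, apply_ite (coeff μ)]
      congr
    · intro ν _ hne
      simp [coeff_monomial, hne, apply_ite (coeff μ)]
    · exact fun h => absurd hμ h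
  · rw [MvPolynomial.notMem_support_iff.mp hμ, ite_self]
    exact Finset.sum_eq_zero fun ν hν => by
      simp only [apply_ite (coeff μ), coeff_monomial, coeff_zero, ite_self]
      split_ifs with h1 h2
      · subst h2; exact MvPolynomial.notMem_support_iff.mp hμ
      all_goals rfl

lemma lineRestrict_pderiv (t : ℝ) (i : Fin 2) (P : MvPolynomial (Fin 2) ℝ) :
    lineRestrict u (t - wt u (Finsupp.single i 1)) (pderiv i P) =
      pderiv i (lineRestrict u t P) := by
  ext ν
  rw [coeff_lineRestrict, coeff_pderiv, coeff_pderiv, coeff_lineRestrict, wt_add]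
  by_cases h : wt u ν + wt u (Finsupp.single i 1) = t
  · rw [if_pos (by linarith), if_pos h]
  · rw [if_neg (fun hc => h (by linarith)), if_neg h, mul_zero]

lemma lineRestrict_sub (t : ℝ) (A B : MvPolynomial (Fin 2) ℝ) :
    lineRestrict u t (A - B) = lineRestrict u t A - lineRestrict u t B := by
  ext μ
  rw [coeff_sub, coeff_lineRestrict, coeff_lineRestrict, coeff_lineRestrict, coeff_sub]
  split_ifs <;> simp

lemma lineRestrict_mul (a b : ℝ) (A B : MvPolynomial (Fin 2) ℝ)
    (hA : ∀ μ ∈ A.support, wt u μ ≤ a) (hB : ∀ μ ∈ B.support, wt u μ ≤ b) :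
    lineRestrict u (a + b) (A * B) = lineRestrict u a A * lineRestrict u b B := by
  classical
  ext μ
  rw [coeff_lineRestrict, coeff_mul, coeff_mul]
  simp only [coeff_lineRestrict]
  by_cases h : wt u μ = a + b
  · rw [if_pos h]
    refine Finset.sum_congr rfl fun x hx => ?_
    rw [Finset.HasAntidiagonal.mem_antidiagonal] at hx
    by_cases h1 : coeff x.1 A = 0
    · simp [h1]
    by_cases h2 : coeff x.2 B = 0
    · simp [h2]
    have ha := hA x.1 (MvPolynomial.mem_support_iff.mpr h1)
    have hb := hB x.2 (MvPolynomial.mem_support_iff.mpr h2)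
    have hsum : wt u x.1 + wt u x.2 = a + b := by rw [← wt_add, hx, h]
    rw [if_pos (by linarith), if_pos (by linarith)]
  · rw [if_neg h]
    symm
    refine Finset.sum_eq_zero fun x hx => ?_
    rw [Finset.HasAntidiagonal.mem_antidiagonal] at hx
    split_ifs with h1 h2
    · exfalso
      exact h (by rw [← hx, wt_add, h1, h2])
    all_goals simp

lemma wt_bound_pderiv (t : ℝ) (i : Fin 2) (P : MvPolynomial (Fin 2) ℝ)
    (h : ∀ μ ∈ P.support, wt u μ ≤ t) :
    ∀ ν ∈ (pderiv i P).support, wt u ν ≤ t - wt u (Finsupp.single i 1) := by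
  intro ν hν
  rw [MvPolynomial.mem_support_iff, coeff_pderiv] at hν
  have h2 : coeff (ν + Finsupp.single i 1) P ≠ 0 := fun hc => hν (by simp [hc])
  have := h _ (MvPolynomial.mem_support_iff.mpr h2)
  rw [wt_add] at this
  linarith

lemma wt_bound_mul (a b : ℝ) (A B : MvPolynomial (Fin 2) ℝ)
    (hA : ∀ μ ∈ A.support, wt u μ ≤ a) (hB : ∀ μ ∈ B.support, wt u μ ≤ b) :
    ∀ μ ∈ (A * B).support, wt u μ ≤ a + b := by
  classical
  intro μ hμ
  have hm := MvPolynomial.support_mul A B hμ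
  rw [Finset.mem_add] at hm
  obtain ⟨α, hα, β, hβ, rfl⟩ := hm
  rw [wt_add]
  exact add_le_add (hA _ hα) (hB _ hβ)

lemma wt_single_zero : wt u (Finsupp.single (0 : Fin 2) 1) = u.1 := by
  simp [wt, Finsupp.single_apply]

lemma wt_single_one : wt u (Finsupp.single (1 : Fin 2) 1) = u.2 := by
  simp [wt, Finsupp.single_apply]

end Helpers

theorem statement18 (P : MvPolynomial (Fin 2) ℝ) (u : ℝ × ℝ) (hu : u ≠ 0) (t : ℝ)
    (hH : ∀ μ ∈ P.support, u.1 * (μ 0 : ℝ) + u.2 * (μ 1 : ℝ) ≤ t) :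
    (∀ μ ∈ (hessDet P).support,
      u.1 * (μ 0 : ℝ) + u.2 * (μ 1 : ℝ) ≤ 2 * t - 2 * u.1 - 2 * u.2) ∧
    lineRestrict u (2 * t - 2 * u.1 - 2 * u.2) (hessDet P) =
      hessDet (lineRestrict u t P) := by
  classical
  set e0 := wt u (Finsupp.single (0 : Fin 2) 1) with he0def
  set e1 := wt u (Finsupp.single (1 : Fin 2) 1) with he1def
  have he0 : e0 = u.1 := wt_single_zero u
  have he1 : e1 = u.2 := wt_single_one u
  have hHw : ∀ μ ∈ P.support, wt u μ ≤ t := hH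
  have hx : ∀ μ ∈ (Pdx P).support, wt u μ ≤ t - e0 := wt_bound_pderiv u t 0 P hHw
  have hy : ∀ μ ∈ (Pdy P).support, wt u μ ≤ t - e1 := wt_bound_pderiv u t 1 P hHw
  have hxx : ∀ μ ∈ (Pdx (Pdx P)).support, wt u μ ≤ t - e0 - e0 :=
    wt_bound_pderiv u (t - e0) 0 (Pdx P) hx
  have hyy : ∀ μ ∈ (Pdy (Pdy P)).support, wt u μ ≤ t - e1 - e1 :=
    wt_bound_pderiv u (t - e1) 1 (Pdy P) hy
  have hxy : ∀ μ ∈ (Pdy (Pdx P)).support, wt u μ ≤ t - e0 - e1 :=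
    wt_bound_pderiv u (t - e0) 1 (Pdx P) hx
  have hs : (2 * t - 2 * u.1 - 2 * u.2) = (t - e0 - e0) + (t - e1 - e1) := by
    rw [he0, he1]; ring
  have hs' : (2 * t - 2 * u.1 - 2 * u.2) = (t - e0 - e1) + (t - e0 - e1) := by
    rw [he0, he1]; ring
  constructor
  · intro μ hμ
    have : MvPolynomial.coeff μ (hessDet P) ≠ 0 := MvPolynomial.mem_support_iff.mp hμ
    simp only [hessDet] at this
    rw [MvPolynomial.coeff_sub] at this
    have : MvPolynomial.coeff μ (Pdx (Pdx P) * Pdy (Pdy P)) ≠ 0 ∨ MvPolynomial.coeff μ (Pdy (Pdx P) ^ 2) ≠ 0 := by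
      by_contra hc
      push_neg at hc
      rw [hc.1, hc.2, sub_zero] at this
      exact this rfl
    rcases this with h | h
    · have := wt_bound_mul u _ _ _ _ hxx hyy μ (MvPolynomial.mem_support_iff.mpr h)
      calc u.1 * (μ 0 : ℝ) + u.2 * (μ 1 : ℝ) = wt u μ := rfl
        _ ≤ _ := by linarith [this]
    · rw [sq] at h
      have := wt_bound_mul u _ _ _ _ hxy hxy μ (MvPolynomial.mem_support_iff.mpr h)
      calc u.1 * (μ 0 : ℝ) + u.2 * (μ 1 : ℝ) = wt u μ := rfl
        _ ≤ _ := by linarith [this]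
  · simp only [hessDet]
    rw [lineRestrict_sub]
    congr 1
    · rw [hs, lineRestrict_mul u _ _ _ _ hxx hyy]
      congr 1
      · show lineRestrict u (t - e0 - e0) (MvPolynomial.pderiv 0 (MvPolynomial.pderiv 0 P)) = _
        rw [lineRestrict_pderiv u (t - e0) 0, lineRestrict_pderiv u t 0]
        rfl
      · show lineRestrict u (t - e1 - e1) (MvPolynomial.pderiv 1 (MvPolynomial.pderiv 1 P)) = _
        rw [lineRestrict_pderiv u (t - e1) 1, lineRestrict_pderiv u t 1]
        rfl
    · rw [sq, sq, hs', lineRestrict_mul u _ _ _ _ hxy hxy]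
      have : lineRestrict u (t - e0 - e1) (Pdy (Pdx P)) = Pdy (Pdx (lineRestrict u t P)) := by
        show lineRestrict u (t - e0 - e1) (MvPolynomial.pderiv 1 (MvPolynomial.pderiv 0 P)) = _
        rw [lineRestrict_pderiv u (t - e0) 1, lineRestrict_pderiv u t 0]
        rfl
      rw [this]

end
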